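/- arXiv:1212.1895 — 2 statements merged into one kernel-verified Lean document; each statement's English description precedes it below -/
import Mathlib

section
/- The affine-linear action of Sp(2g,F_2) on theta characteristics preserves the syzygy invariant: e(γ·m₁, γ·m₂, γ·m₃) = e(m₁,m₂,m₃) for all γ ∈ Sp(2g,F_2) and all triples of characteristics, where the action is γ·m = γ̃m + t(γ) with γ̃ = (D -C; -B A) and t(γ) = (diag(CᵗD), diag(AᵗB)). -/
open Finset

/-- The space of theta characteristics in genus `g`: pairs `(m', m'')` of vectors in `F_2^g`. -/
abbrev V (g : ℕ) := (Fin g → ZMod 2) × (Fin g → ZMod 2)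

/-- The `F_2`-inner product of two vectors. -/
def dotp {g : ℕ} (a b : Fin g → ZMod 2) : ZMod 2 := ∑ i, a i * b i

/-- The parity invariant `m'·m'' ∈ F_2`; `m` is even iff `par m = 0`. -/
def par {g : ℕ} (m : V g) : ZMod 2 := dotp m.1 m.2

/-- The sign `e(m) = (-1)^{m'·m''}`. -/
def e {g : ℕ} (m : V g) : ℤ := (-1) ^ (par m).val

/-- The syzygy invariant `e(m₁,m₂,m₃) = e(m₁)e(m₂)e(m₃)e(m₁+m₂+m₃)`. -/
def e3 {g : ℕ} (m₁ m₂ m₃ : V g) : ℤ := e m₁ * e m₂ * e m₃ * e (m₁ + m₂ + m₃)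

/-- The standard symplectic form `⟨m,n⟩ = m'·n'' + m''·n'` on `F_2^{2g}`. -/
def sp {g : ℕ} (m n : V g) : ZMod 2 := dotp m.1 n.2 + dotp m.2 n.1

/-- The standard linear action of a block matrix `(A B; C D)` on `F_2^g × F_2^g`. -/
def stdAct {g : ℕ} (A B C D : Matrix (Fin g) (Fin g) (ZMod 2)) (m : V g) : V g :=
  (A.mulVec m.1 + B.mulVec m.2, C.mulVec m.1 + D.mulVec m.2)

/-- `(A B; C D)` belongs to `Sp(2g, F_2)`: it preserves the symplectic form. -/
def IsSymp {g : ℕ} (A B C D : Matrix (Fin g) (Fin g) (ZMod 2)) : Prop :=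
  ∀ m n : V g, sp (stdAct A B C D m) (stdAct A B C D n) = sp m n

/-- The linear part `(D -C; -B A)` of the action on characteristics (signs are
irrelevant over `F_2`). -/
def twist {g : ℕ} (A B C D : Matrix (Fin g) (Fin g) (ZMod 2)) (m : V g) : V g :=
  (D.mulVec m.1 + C.mulVec m.2, B.mulVec m.1 + A.mulVec m.2)

/-- The translation part `(diag(CᵗD), diag(AᵗB))` of the action on characteristics. -/
def trvec {g : ℕ} (A B C D : Matrix (Fin g) (Fin g) (ZMod 2)) : V g :=
  (fun i => (C.transpose * D) i i, fun i => (A.transpose * B) i i)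

/-- The affine-linear action `γ·m = γ̃ m + t(γ)` of `Sp(2g,F_2)` on theta characteristics. -/
def act {g : ℕ} (A B C D : Matrix (Fin g) (Fin g) (ZMod 2)) (m : V g) : V g :=
  twist A B C D m + trvec A B C D

section aux
variable {g : ℕ}

lemma dotp_add_left (a b c : Fin g → ZMod 2) : dotp (a + b) c = dotp a c + dotp b c := by
  simp [dotp, add_mul, Finset.sum_add_distrib]

lemma dotp_comm (a b : Fin g → ZMod 2) : dotp a b = dotp b a := by
  simp [dotp, mul_comm]

lemma sp_add_left (m n p : V g) : sp (m + n) p = sp m p + sp n p := by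
  simp only [sp, Prod.fst_add, Prod.snd_add, dotp_add_left]; ring

lemma sp_comm (m n : V g) : sp m n = sp n m := by
  simp only [sp, dotp_comm]; ring

lemma sp_add_right (m n p : V g) : sp m (n + p) = sp m n + sp m p := by
  rw [sp_comm, sp_add_left, sp_comm n m, sp_comm p m]

lemma sp_self (m : V g) : sp m m = 0 := by
  simp only [sp, dotp_comm m.2 m.1]
  rw [← two_mul]
  simp [show (2 : ZMod 2) = 0 from rfl]

lemma par_add (m n : V g) : par (m + n) = par m + par n + sp m n := by
  simp only [par, sp, dotp, Prod.fst_add, Prod.snd_add, Pi.add_apply,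
    ← Finset.sum_add_distrib]
  exact Finset.sum_congr rfl fun i _ => by ring

lemma sp_swap (m n : V g) : sp m.swap n.swap = sp m n := by
  simp only [sp, Prod.swap]; ring

lemma twist_eq (A B C D : Matrix (Fin g) (Fin g) (ZMod 2)) (m : V g) :
    twist A B C D m = (stdAct A B C D m.swap).swap := by
  simp only [twist, stdAct, Prod.swap]
  exact Prod.ext (add_comm _ _) (add_comm _ _)

lemma sp_twist {A B C D : Matrix (Fin g) (Fin g) (ZMod 2)} (h : IsSymp A B C D)
    (m n : V g) : sp (twist A B C D m) (twist A B C D n) = sp m n := by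
  rw [twist_eq, twist_eq, sp_swap, h, sp_swap]

lemma e3_eq (m₁ m₂ m₃ : V g) :
    e3 m₁ m₂ m₃ = (-1 : ℤ) ^ (sp m₁ m₂ + sp m₁ m₃ + sp m₂ m₃).val := by
  have hp : par (m₁ + m₂ + m₃)
      = par m₁ + par m₂ + par m₃ + (sp m₁ m₂ + sp m₁ m₃ + sp m₂ m₃) := by
    rw [par_add, par_add, sp_add_left]; ring
  have key : ∀ p1 p2 p3 s : ZMod 2,
      (-1 : ℤ) ^ p1.val * (-1) ^ p2.val * (-1) ^ p3.val * (-1) ^ (p1 + p2 + p3 + s).val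
        = (-1) ^ s.val := by decide
  simp only [e3, e, hp]
  exact key _ _ _ _
end aux

theorem syzygy_invariant_under_Sp (g : ℕ) (A B C D : Matrix (Fin g) (Fin g) (ZMod 2))
    (h : IsSymp A B C D) (m₁ m₂ m₃ : V g) :
    e3 (act A B C D m₁) (act A B C D m₂) (act A B C D m₃) = e3 m₁ m₂ m₃ := by
  rw [e3_eq, e3_eq]
  congr 1
  set t := trvec A B C D with ht
  have hpair : ∀ x y : V g, sp (act A B C D x) (act A B C D y)
      = sp x y + sp (twist A B C D x) t + sp (twist A B C D y) t := by
    intro x y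
    simp only [act, sp_add_left, sp_add_right, sp_self, sp_twist h, ← ht,
      sp_comm t (twist A B C D y)]
    ring
  rw [hpair, hpair, hpair]
  have cancel : ∀ s12 s13 s23 a1 a2 a3 : ZMod 2,
      (s12 + a1 + a2) + (s13 + a1 + a3) + (s23 + a2 + a3) = s12 + s13 + s23 := by decide
  rw [cancel]
end

section
/- Let m₁,...,m₇ be the Aronhold set (111,111), (110,100), (101,001), (100,110), (010,011), (001,101), (011,010), and let F = {(123),(145),(167),(247),(256),(346),(357)} be a set of seven 3-element subsets of {1,...,7} such that any two intersect in exactly one element. Then the seven triple sums m_i + m_j + m_k for (ijk) ∈ F, together with 0, form a Lagrangian subspace of F_2^6 consisting entirely of even characteristics. -/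
open Finset

private def c₁ : V 3 := (![1,1,1], ![1,1,1])
private def c₂ : V 3 := (![1,1,0], ![1,0,0])
private def c₃ : V 3 := (![1,0,1], ![0,0,1])
private def c₄ : V 3 := (![1,0,0], ![1,1,0])
private def c₅ : V 3 := (![0,1,0], ![0,1,1])
private def c₆ : V 3 := (![0,0,1], ![1,0,1])
private def c₇ : V 3 := (![0,1,1], ![0,1,0])

private def Lfin : Finset (V 3) :=
  {0, c₁ + c₂ + c₃, c₁ + c₄ + c₅, c₁ + c₆ + c₇, c₂ + c₄ + c₇,
   c₂ + c₅ + c₆, c₃ + c₄ + c₆, c₃ + c₅ + c₇}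

private lemma hadd : ∀ a ∈ Lfin, ∀ b ∈ Lfin, a + b ∈ Lfin := by decide
private lemma hzero : (0 : V 3) ∈ Lfin := by decide
private lemma hsmul : ∀ (c : ZMod 2), ∀ a ∈ Lfin, c • a ∈ Lfin := by decide

private def Lsub : Submodule (ZMod 2) (V 3) where
  carrier := ↑Lfin
  add_mem' := fun ha hb => hadd _ ha _ hb
  zero_mem' := hzero
  smul_mem' := fun c a ha => hsmul c a ha

private instance : Fintype ↥Lsub := Fintype.subtype Lfin (fun _ => Iff.rfl)

private lemma hcard : Fintype.card ↥Lsub = 8 := by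
  exact (Fintype.subtype_card Lfin (fun _ => Iff.rfl)).trans (by decide)

private lemma hrank : Module.finrank (ZMod 2) ↥Lsub = 3 := by
  have h := Module.card_eq_pow_finrank (K := ZMod 2) (V := ↥Lsub)
  rw [hcard, ZMod.card] at h
  have h3 : (2:ℕ) ^ 3 = 2 ^ Module.finrank (ZMod 2) ↥Lsub := h
  exact (Nat.pow_right_injective (le_refl 2) h3).symm

private lemma hsp : ∀ m ∈ Lfin, ∀ n ∈ Lfin, sp m n = 0 := by decide
private lemma hpar : ∀ m ∈ Lfin, par m = 0 := by decide

private lemma hset : (↑Lfin : Set (V 3)) =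
    {0, c₁ + c₂ + c₃, c₁ + c₄ + c₅, c₁ + c₆ + c₇, c₂ + c₄ + c₇,
     c₂ + c₅ + c₆, c₃ + c₄ + c₆, c₃ + c₅ + c₇} := by
  simp [Lfin]

theorem aronhold_triple_sums_fano :
    let m₁ : V 3 := (![1,1,1], ![1,1,1])
    let m₂ : V 3 := (![1,1,0], ![1,0,0])
    let m₃ : V 3 := (![1,0,1], ![0,0,1])
    let m₄ : V 3 := (![1,0,0], ![1,1,0])
    let m₅ : V 3 := (![0,1,0], ![0,1,1])
    let m₆ : V 3 := (![0,0,1], ![1,0,1])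
    let m₇ : V 3 := (![0,1,1], ![0,1,0])
    ∃ L : Submodule (ZMod 2) (V 3),
      (L : Set (V 3)) =
        {0, m₁ + m₂ + m₃, m₁ + m₄ + m₅, m₁ + m₆ + m₇, m₂ + m₄ + m₇,
         m₂ + m₅ + m₆, m₃ + m₄ + m₆, m₃ + m₅ + m₇} ∧
      Module.finrank (ZMod 2) L = 3 ∧
      (∀ m ∈ L, ∀ n ∈ L, sp m n = 0) ∧
      (∀ m ∈ L, par m = 0) := by
  exact ⟨Lsub, hset, hrank, hsp, hpar⟩
end
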